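/- Let c ≤ a < x be real numbers, let μ > −1, let α ≥ 0 be a non-integer real number and set n = ⌈α⌉. Then the Riemann–Liouville fractional derivative of order α with base point a of the function t ↦ (t − c)^μ, evaluated at x, satisfies (1/Γ(n−α)) · (dⁿ/dxⁿ) ∫_a^x (x − t)^{n−α−1} (t − c)^μ dt = (Γ(μ+1)/Γ(μ+n−α+1)) · (dⁿ/dxⁿ)[ (x − c)^{μ+n−α} · G_{n−α}((a−c)/(x−c), μ+1) ], where G_β(r, p) := 1 − B_r(p, β)/B(p, β) and both n-th derivatives are taken with respect to x. -/

import Mathlib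

/-- The (complete) Beta function `B(p, q) = ∫_0^1 t^{p-1} (1-t)^{q-1} dt`. -/
noncomputable def betaFun (p q : ℝ) : ℝ :=
  ∫ t in (0:ℝ)..1, t ^ (p - 1) * (1 - t) ^ (q - 1)

/-- The incomplete Beta function `B_r(p, q) = ∫_0^r t^{p-1} (1-t)^{q-1} dt`. -/
noncomputable def incBetaFun (r p q : ℝ) : ℝ :=
  ∫ t in (0:ℝ)..r, t ^ (p - 1) * (1 - t) ^ (q - 1)

/-- `G_β(r, p) := 1 - B_r(p, β) / B(p, β)`. -/
noncomputable def Gfun (β r p : ℝ) : ℝ :=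
  1 - incBetaFun r p β / betaFun p β

open MeasureTheory intervalIntegral

lemma betaIntegrand_integrable {p q : ℝ} (hp : 0 < p) (hq : 0 < q) :
    IntervalIntegrable (fun t : ℝ => t ^ (p - 1) * (1 - t) ^ (q - 1)) volume 0 1 := by
  have h1 : IntervalIntegrable (fun t : ℝ => t ^ (p - 1) * (1 - t) ^ (q - 1)) volume 0 (1/2) := by
    apply (intervalIntegrable_rpow' (by linarith)).mul_continuousOn
    apply ContinuousOn.rpow_const (by fun_prop)
    intro t ht
    rw [Set.uIcc_of_le (by norm_num)] at ht
    exact Or.inl (by simp at ht; nlinarith [ht.2])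
  have h2 : IntervalIntegrable (fun t : ℝ => t ^ (p - 1) * (1 - t) ^ (q - 1)) volume (1/2) 1 := by
    apply IntervalIntegrable.continuousOn_mul
    · have := (intervalIntegrable_rpow' (r := q - 1) (a := (0:ℝ)) (b := 1/2)
        (by linarith)).comp_sub_left 1
      norm_num at this ⊢
      exact this.symm
    · apply ContinuousOn.rpow_const (by fun_prop)
      intro t ht
      rw [Set.uIcc_of_le (by norm_num)] at ht
      exact Or.inl (by simp at ht; nlinarith [ht.1])
  exact h1.trans h2

lemma betaFun_eq {p q : ℝ} (hp : 0 < p) (hq : 0 < q) :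
    betaFun p q = Real.Gamma p * Real.Gamma q / Real.Gamma (p + q) := by
  have hC : Complex.Gamma p * Complex.Gamma q
      = Complex.Gamma (p + q) * Complex.betaIntegral p q :=
    Complex.Gamma_mul_Gamma_eq_betaIntegral (by simpa using hp) (by simpa using hq)
  have hB : Complex.betaIntegral (p : ℂ) (q : ℂ) = (betaFun p q : ℂ) := by
    rw [Complex.betaIntegral, betaFun, ← intervalIntegral.integral_ofReal]
    apply intervalIntegral.integral_congr
    intro t ht
    rw [Set.uIcc_of_le (by norm_num)] at ht
    show (t:ℂ) ^ ((p:ℂ) - 1) * (1 - (t:ℂ)) ^ ((q:ℂ) - 1)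
      = ((t ^ (p - 1) * (1 - t) ^ (q - 1) : ℝ) : ℂ)
    rw [Complex.ofReal_mul, Complex.ofReal_cpow ht.1, Complex.ofReal_cpow (by linarith [ht.2])]
    push_cast
    ring_nf
  rw [hB, ← Complex.ofReal_add, Complex.Gamma_ofReal, Complex.Gamma_ofReal,
    Complex.Gamma_ofReal, ← Complex.ofReal_mul, ← Complex.ofReal_mul] at hC
  have h := Complex.ofReal_inj.mp hC
  have hG : Real.Gamma (p + q) ≠ 0 := (Real.Gamma_pos_of_pos (by linarith)).ne'
  field_simp
  linarith [h]

lemma betaFun_pos {p q : ℝ} (hp : 0 < p) (hq : 0 < q) : 0 < betaFun p q := by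
  rw [betaFun_eq hp hq]
  exact div_pos (mul_pos (Real.Gamma_pos_of_pos hp) (Real.Gamma_pos_of_pos hq))
    (Real.Gamma_pos_of_pos (by linarith))

lemma iteratedDeriv_const_mul' (c : ℝ) (f : ℝ → ℝ) (n : ℕ) (x : ℝ) :
    iteratedDeriv n (fun y => c * f y) x = c * iteratedDeriv n f x := by
  induction n generalizing x with
  | zero => simp
  | succ n ih =>
    rw [iteratedDeriv_succ, iteratedDeriv_succ]
    have : iteratedDeriv n (fun y => c * f y) = fun y => c * iteratedDeriv n f y :=
      funext fun y => ih y
    rw [this, deriv_const_mul_field]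

lemma eventuallyEq_iteratedDeriv {f g : ℝ → ℝ} {x : ℝ} (n : ℕ) (h : f =ᶠ[nhds x] g) :
    iteratedDeriv n f x = iteratedDeriv n g x := by
  induction n generalizing f g with
  | zero => simpa using h.eq_of_nhds
  | succ n ih =>
    rw [iteratedDeriv_succ', iteratedDeriv_succ']
    exact ih h.deriv

/-- Case `α ≥ 0` (non-integer, `n = ⌈α⌉`) of the Riemann–Liouville fractional
derivative of the power function `t ↦ (t - c)^μ` with base point `a`, in the
compact form obtained before applying the Leibniz rule:
`(1/Γ(n-α)) (dⁿ/dxⁿ) ∫_a^x (x-t)^{n-α-1} (t-c)^μ dt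
  = (Γ(μ+1)/Γ(μ+n-α+1)) (dⁿ/dxⁿ)[ (x-c)^{μ+n-α} G_{n-α}((a-c)/(x-c), μ+1) ]`. -/
theorem riemannLiouville_deriv_power_nonneg_order
    (a c x μ α : ℝ) (n : ℕ) (hca : c ≤ a) (hax : a < x) (hμ : -1 < μ)
    (hα : 0 ≤ α) (hαint : ∀ m : ℤ, α ≠ (m : ℝ)) (hn : n = ⌈α⌉₊) :
    (1 / Real.Gamma ((n : ℝ) - α)) *
        iteratedDeriv n
          (fun y => ∫ t in a..y, (y - t) ^ ((n : ℝ) - α - 1) * (t - c) ^ μ) x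
      = (Real.Gamma (μ + 1) / Real.Gamma (μ + (n : ℝ) - α + 1)) *
        iteratedDeriv n
          (fun y => (y - c) ^ (μ + (n : ℝ) - α) *
            Gfun ((n : ℝ) - α) ((a - c) / (y - c)) (μ + 1)) x := by
  set β : ℝ := (n : ℝ) - α with hβdef
  have hαn : α < n := by
    have h1 : α ≤ (n : ℝ) := hn ▸ Nat.le_ceil α
    have h2 : α ≠ (n : ℝ) := by simpa using hαint n
    exact lt_of_le_of_ne h1 h2
  have hβ : 0 < β := by simp [hβdef]; linarith
  have hμ1 : 0 < μ + 1 := by linarith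
  have hBpos : 0 < betaFun (μ + 1) β := betaFun_pos hμ1 hβ
  have hInt01 : IntervalIntegrable (fun t : ℝ => t ^ μ * (1 - t) ^ (β - 1)) volume 0 1 := by
    have := betaIntegrand_integrable hμ1 hβ
    simpa using this
  -- key pointwise identity for y > a
  have key : ∀ y : ℝ, a < y →
      (∫ t in a..y, (y - t) ^ (β - 1) * (t - c) ^ μ)
        = betaFun (μ + 1) β *
            ((y - c) ^ (μ + β) * Gfun β ((a - c) / (y - c)) (μ + 1)) := by
    intro y hy
    have hd : 0 < y - c := by linarith
    set d : ℝ := y - c with hddef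
    set r : ℝ := (a - c) / d with hrdef
    have hr0 : 0 ≤ r := div_nonneg (by linarith) hd.le
    have hr1 : r < 1 := (div_lt_one hd).mpr (by linarith)
    -- substitution t = d*s + c
    have e1 : d * r + c = a := by rw [hrdef]; field_simp; ring
    have e2 : d * 1 + c = y := by rw [hddef]; ring
    have hsub : (∫ t in a..y, (y - t) ^ (β - 1) * (t - c) ^ μ)
        = d • ∫ s in r..1, (y - (d * s + c)) ^ (β - 1) * ((d * s + c) - c) ^ μ := by
      have base := intervalIntegral.smul_integral_comp_mul_add (a := r) (b := 1)
        (f := fun t => (y - t) ^ (β - 1) * (t - c) ^ μ) d c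
      rw [e1, e2] at base
      exact base.symm
    have hcongr : (∫ s in r..1, (y - (d * s + c)) ^ (β - 1) * ((d * s + c) - c) ^ μ)
        = ∫ s in r..1, (d ^ (β - 1) * d ^ μ) * (s ^ μ * (1 - s) ^ (β - 1)) := by
      apply intervalIntegral.integral_congr
      intro s hs
      rw [Set.uIcc_of_le hr1.le] at hs
      have hs0 : 0 ≤ s := le_trans hr0 hs.1
      have hs1 : 0 ≤ 1 - s := by linarith [hs.2]
      show (y - (d * s + c)) ^ (β - 1) * ((d * s + c) - c) ^ μ
        = d ^ (β - 1) * d ^ μ * (s ^ μ * (1 - s) ^ (β - 1))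
      have e1 : y - (d * s + c) = d * (1 - s) := by rw [hddef]; ring
      have e2 : (d * s + c) - c = d * s := by ring
      rw [e1, e2, Real.mul_rpow hd.le hs1, Real.mul_rpow hd.le hs0]
      ring
    have hsplit : (∫ s in r..1, s ^ μ * (1 - s) ^ (β - 1))
        = betaFun (μ + 1) β - incBetaFun r (μ + 1) β := by
      have hIr : IntervalIntegrable (fun s : ℝ => s ^ μ * (1 - s) ^ (β - 1)) volume 0 r :=
        hInt01.mono_set (by
          rw [Set.uIcc_of_le hr0, Set.uIcc_of_le (by norm_num : (0:ℝ) ≤ 1)]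
          exact Set.Icc_subset_Icc le_rfl hr1.le)
      have hIr1 : IntervalIntegrable (fun s : ℝ => s ^ μ * (1 - s) ^ (β - 1)) volume r 1 :=
        hInt01.mono_set (by
          rw [Set.uIcc_of_le hr1.le, Set.uIcc_of_le (by norm_num : (0:ℝ) ≤ 1)]
          exact Set.Icc_subset_Icc hr0 le_rfl)
      have hadd := intervalIntegral.integral_add_adjacent_intervals hIr hIr1
      have hb : betaFun (μ + 1) β = ∫ s in (0:ℝ)..1, s ^ μ * (1 - s) ^ (β - 1) := by
        rw [betaFun]; norm_num
      have hib : incBetaFun r (μ + 1) β = ∫ s in (0:ℝ)..r, s ^ μ * (1 - s) ^ (β - 1) := by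
        rw [incBetaFun]; norm_num
      rw [hb, hib, ← hadd]; ring
    rw [hsub, hcongr, intervalIntegral.integral_const_mul, hsplit]
    have hG : Gfun β r (μ + 1) = (betaFun (μ + 1) β - incBetaFun r (μ + 1) β) / betaFun (μ + 1) β := by
      rw [Gfun]; field_simp
    rw [hG]
    have hdpow : d * (d ^ (β - 1) * d ^ μ) = d ^ (μ + β) := by
      rw [show μ + β = 1 + (β - 1) + μ by ring, Real.rpow_add hd, Real.rpow_add hd,
        Real.rpow_one]
      ring
    rw [smul_eq_mul, ← mul_assoc, hdpow]
    field_simp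
  -- transfer to iterated derivatives via eventual equality near x
  have hev : (fun y => ∫ t in a..y, (y - t) ^ (β - 1) * (t - c) ^ μ)
      =ᶠ[nhds x] (fun y => betaFun (μ + 1) β *
          ((y - c) ^ (μ + β) * Gfun β ((a - c) / (y - c)) (μ + 1))) := by
    filter_upwards [Ioi_mem_nhds hax] with y hy
    exact key y hy
  have hiter := eventuallyEq_iteratedDeriv n hev
  have hconst := iteratedDeriv_const_mul' (betaFun (μ + 1) β)
    (fun y => (y - c) ^ (μ + β) * Gfun β ((a - c) / (y - c)) (μ + 1)) n x
  have hexp : ∀ y : ℝ, (y - c) ^ (μ + (n : ℝ) - α) *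
      Gfun ((n : ℝ) - α) ((a - c) / (y - c)) (μ + 1)
      = (y - c) ^ (μ + β) * Gfun β ((a - c) / (y - c)) (μ + 1) := by
    intro y
    have : μ + (n : ℝ) - α = μ + β := by rw [hβdef]; ring
    rw [this]
  have hfun1 : (fun y => ∫ t in a..y, (y - t) ^ ((n : ℝ) - α - 1) * (t - c) ^ μ)
      = (fun y => ∫ t in a..y, (y - t) ^ (β - 1) * (t - c) ^ μ) := rfl
  have hfun2 : (fun y => (y - c) ^ (μ + (n : ℝ) - α) *
        Gfun ((n : ℝ) - α) ((a - c) / (y - c)) (μ + 1))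
      = (fun y => (y - c) ^ (μ + β) * Gfun β ((a - c) / (y - c)) (μ + 1)) :=
    funext hexp
  rw [hfun1, hfun2, hiter, hconst]
  have hBeq : betaFun (μ + 1) β = Real.Gamma (μ + 1) * Real.Gamma β / Real.Gamma (μ + 1 + β) :=
    betaFun_eq hμ1 hβ
  have hGβ : Real.Gamma β ≠ 0 := (Real.Gamma_pos_of_pos hβ).ne'
  have hGs : Real.Gamma (μ + 1 + β) ≠ 0 := (Real.Gamma_pos_of_pos (by linarith)).ne'
  have harg : μ + (n : ℝ) - α + 1 = μ + 1 + β := by rw [hβdef]; ring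
  rw [harg, hBeq]
  field_simp
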